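/- arXiv:1304.4135 — 5 statements merged into one kernel-verified Lean document; each statement's English description precedes it below -/
import Mathlib

section
/- Let f : cl(B) → ℂ be continuously differentiable on the closed unit ball of ℝ³. Then for every unit vector ω ∈ S² and every r ∈ [0,1], r² |f(rω)|² ≤ |f(ω)|² + ∫_0^1 |ω^j ∂_j f(sω)|² s² ds, where ω^j ∂_j f denotes the radial directional derivative. -/
open Metric MeasureTheory intervalIntegral

/-- Radial fundamental theorem of calculus estimate: for `f` continuously
differentiable on the closed unit ball of `ℝ³`, every unit vector `ω`, and every
`r ∈ [0,1]`, `r²|f(rω)|² ≤ |f(ω)|² + ∫_0^1 |ω^j∂_jf(sω)|² s² ds`. -/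
theorem stmt1 (f : EuclideanSpace ℝ (Fin 3) → ℂ)
    (hf : ContDiffOn ℝ 1 f (closedBall 0 1))
    (ω : EuclideanSpace ℝ (Fin 3)) (hω : ‖ω‖ = 1)
    (r : ℝ) (hr : r ∈ Set.Icc (0:ℝ) 1) :
    r ^ 2 * ‖f (r • ω)‖ ^ 2 ≤
      ‖f ω‖ ^ 2 + ∫ s in (0:ℝ)..1, ‖fderiv ℝ f (s • ω) ω‖ ^ 2 * s ^ 2 := by
  obtain ⟨hr0, hr1⟩ := hr
  set S : Set (EuclideanSpace ℝ (Fin 3)) := closedBall 0 1 with hS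
  have hUD : UniqueDiffOn ℝ S :=
    uniqueDiffOn_convex (convex_closedBall _ _)
      (by rw [interior_closedBall _ one_ne_zero]; exact ⟨0, by simp⟩)
  -- smul map facts
  have hsmul_cont : Continuous fun s : ℝ => s • ω := continuous_id.smul continuous_const
  have hnorm : ∀ s : ℝ, ‖s • ω‖ = |s| := by intro s; rw [norm_smul, hω]; simp
  have hmaps : Set.MapsTo (fun s : ℝ => s • ω) (Set.Icc 0 1) S := by
    intro s hs
    simp only [hS, mem_closedBall, dist_zero_right, hnorm s]
    rw [abs_of_nonneg hs.1]; exact hs.2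
  have hball : ∀ s : ℝ, |s| < 1 → s • ω ∈ ball (0 : EuclideanSpace ℝ (Fin 3)) 1 := by
    intro s hs; simp only [mem_ball, dist_zero_right, hnorm s]; exact hs
  have hnhds : ∀ s : ℝ, |s| < 1 → S ∈ nhds (s • ω) := by
    intro s hs
    exact Filter.mem_of_superset (isOpen_ball.mem_nhds (hball s hs)) ball_subset_closedBall
  -- fderiv = fderivWithin on interior
  have hDeq : ∀ s : ℝ, |s| < 1 → fderivWithin ℝ f S (s • ω) = fderiv ℝ f (s • ω) := by
    intro s hs; exact fderivWithin_of_mem_nhds (hnhds s hs)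
  set c : ℝ → ℝ := fun s => ‖fderivWithin ℝ f S (s • ω) ω‖ ^ 2 * s ^ 2 with hc
  have hc_nonneg : ∀ s, 0 ≤ c s := fun s => by positivity
  have hDcont : ContinuousOn (fun s : ℝ => fderivWithin ℝ f S (s • ω)) (Set.Icc 0 1) :=
    (hf.continuousOn_fderivWithin hUD le_rfl).comp hsmul_cont.continuousOn hmaps
  have hc_cont : ContinuousOn c (Set.Icc 0 1) :=
    ((hDcont.clm_apply continuousOn_const).norm.pow 2).mul ((continuous_pow 2).continuousOn)
  have huIcc : Set.uIcc (0:ℝ) 1 = Set.Icc 0 1 := Set.uIcc_of_le zero_le_one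
  have hci : ∀ t ∈ Set.Icc (0:ℝ) 1, IntervalIntegrable c volume 0 t := by
    intro t ht
    apply ContinuousOn.intervalIntegrable
    apply hc_cont.mono
    rw [Set.uIcc_of_le ht.1]
    exact Set.Icc_subset_Icc le_rfl ht.2
  have hfc : ContinuousOn (fun s : ℝ => f (s • ω)) (Set.Icc 0 1) :=
    hf.continuousOn.comp hsmul_cont.continuousOn hmaps
  set G : ℝ → ℝ := fun s => s ^ 2 * ‖f (s • ω)‖ ^ 2 + ∫ t in (0:ℝ)..s, c t with hG
  have hGcont : ContinuousOn G (Set.Icc 0 1) := by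
    apply ContinuousOn.add
    · exact ((continuous_pow 2).continuousOn).mul (hfc.norm.pow 2)
    · have := continuousOn_primitive_interval' (μ := volume)
        (hci 1 ⟨zero_le_one, le_rfl⟩) (Set.left_mem_uIcc (a := (0:ℝ)) (b := 1))
      rwa [huIcc] at this
  -- derivative facts on Ioo 0 1
  have hkey : ∀ s ∈ Set.Ioo (0:ℝ) 1, HasDerivAt G
      (2 * s * ‖f (s • ω)‖ ^ 2 +
        s ^ 2 * (2 * ((fderiv ℝ f (s • ω) ω).re * (f (s • ω)).re
          + (fderiv ℝ f (s • ω) ω).im * (f (s • ω)).im)) + c s) s ∧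
      0 ≤ 2 * s * ‖f (s • ω)‖ ^ 2 +
        s ^ 2 * (2 * ((fderiv ℝ f (s • ω) ω).re * (f (s • ω)).re
          + (fderiv ℝ f (s • ω) ω).im * (f (s • ω)).im)) + c s := by
    intro s hs
    have habs : |s| < 1 := by rw [abs_of_nonneg hs.1.le]; exact hs.2
    have hdf : DifferentiableAt ℝ f (s • ω) :=
      ((hf.differentiableOn one_ne_zero) (s • ω)
        (ball_subset_closedBall (hball s habs))).differentiableAt (hnhds s habs)
    set u : ℂ := f (s • ω) with hu
    set v : ℂ := fderiv ℝ f (s • ω) ω with hv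
    have hsm : HasDerivAt (fun t : ℝ => t • ω) ω s := by
      simpa using (hasDerivAt_id s).smul_const ω
    have hud : HasDerivAt (fun t : ℝ => f (t • ω)) v s :=
      hdf.hasFDerivAt.comp_hasDerivAt s hsm
    have hre : HasDerivAt (fun t : ℝ => (f (t • ω)).re) v.re s :=
      (Complex.reCLM.hasFDerivAt.comp_hasDerivAt s hud)
    have him : HasDerivAt (fun t : ℝ => (f (t • ω)).im) v.im s :=
      (Complex.imCLM.hasFDerivAt.comp_hasDerivAt s hud)
    have hnsq : HasDerivAt (fun t : ℝ => ‖f (t • ω)‖ ^ 2)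
        (2 * (v.re * u.re + v.im * u.im)) s := by
      have h1 : HasDerivAt (fun t : ℝ => (f (t • ω)).re * (f (t • ω)).re
          + (f (t • ω)).im * (f (t • ω)).im)
          ((v.re * u.re + u.re * v.re) + (v.im * u.im + u.im * v.im)) s :=
        (hre.mul hre).add (him.mul him)
      have heq : (fun t : ℝ => ‖f (t • ω)‖ ^ 2)
          = fun t : ℝ => (f (t • ω)).re * (f (t • ω)).re + (f (t • ω)).im * (f (t • ω)).im := by
        funext t
        rw [← Complex.normSq_apply, ← Complex.sq_norm]
      rw [heq]
      convert h1 using 1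
      ring
    have hmul : HasDerivAt (fun t : ℝ => t ^ 2 * ‖f (t • ω)‖ ^ 2)
        (2 * s * ‖u‖ ^ 2 + s ^ 2 * (2 * (v.re * u.re + v.im * u.im))) s := by
      have := (hasDerivAt_pow 2 s).mul hnsq
      refine this.congr_deriv ?_
      rw [hu]; ring
    have hintd : HasDerivAt (fun t : ℝ => ∫ x in (0:ℝ)..t, c x) (c s) s := by
      refine integral_hasDerivAt_right (hci s ⟨hs.1.le, hs.2.le⟩) ?_ ?_
      · exact (hc_cont.mono Set.Ioo_subset_Icc_self).stronglyMeasurableAtFilter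
          isOpen_Ioo s hs
      · exact (hc_cont.continuousAt (Icc_mem_nhds hs.1 hs.2))
    constructor
    · exact hmul.add hintd
    · -- positivity of the derivative
      have hcs : c s = ‖v‖ ^ 2 * s ^ 2 := by
        simp only [hc]
        rw [hDeq s habs, ← hv]
      have hnu : ‖u‖ ^ 2 = u.re ^ 2 + u.im ^ 2 := by
        rw [Complex.sq_norm, Complex.normSq_apply]; ring
      have hnv : ‖v‖ ^ 2 = v.re ^ 2 + v.im ^ 2 := by
        rw [Complex.sq_norm, Complex.normSq_apply]; ring
      rw [hcs, hnu, hnv]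
      have h1 : 0 ≤ s * (u.re + s * v.re) ^ 2 := mul_nonneg hs.1.le (sq_nonneg _)
      have h2 : 0 ≤ s * (u.im + s * v.im) ^ 2 := mul_nonneg hs.1.le (sq_nonneg _)
      have h3 : 0 ≤ s ^ 2 * (1 - s) * (v.re ^ 2 + v.im ^ 2) := by
        have : (0:ℝ) ≤ 1 - s := by linarith [hs.2]
        positivity
      nlinarith [hs.1.le]
  have hGdiff : DifferentiableOn ℝ G (interior (Set.Icc (0:ℝ) 1)) := by
    rw [interior_Icc]
    intro s hs
    exact ((hkey s hs).1.differentiableAt).differentiableWithinAt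
  have hGderiv : ∀ s ∈ interior (Set.Icc (0:ℝ) 1), 0 ≤ deriv G s := by
    rw [interior_Icc]
    intro s hs
    rw [(hkey s hs).1.deriv]
    exact (hkey s hs).2
  have hmono : MonotoneOn G (Set.Icc 0 1) :=
    monotoneOn_of_deriv_nonneg (convex_Icc 0 1) hGcont hGdiff hGderiv
  have hG1 : G r ≤ G 1 := hmono ⟨hr0, hr1⟩ ⟨zero_le_one, le_rfl⟩ hr1
  have hint_nonneg : 0 ≤ ∫ t in (0:ℝ)..r, c t :=
    intervalIntegral.integral_nonneg hr0 (fun t _ => hc_nonneg t)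
  have hfinal : (∫ t in (0:ℝ)..1, c t) = ∫ s in (0:ℝ)..1, ‖fderiv ℝ f (s • ω) ω‖ ^ 2 * s ^ 2 := by
    apply intervalIntegral.integral_congr_ae
    have hne : ∀ᵐ s : ℝ, s ≠ 1 := by
      refine MeasureTheory.ae_iff.2 ?_
      simp only [not_not]
      simp [Real.volume_singleton]
    filter_upwards [hne] with s hs1 hsI
    rw [Set.uIoc_of_le zero_le_one] at hsI
    have habs : |s| < 1 := by
      rw [abs_of_nonneg hsI.1.le]
      exact lt_of_le_of_ne hsI.2 hs1
    rw [hc]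
    simp only [hDeq s habs]
  calc r ^ 2 * ‖f (r • ω)‖ ^ 2 ≤ G r := le_add_of_nonneg_right hint_nonneg
    _ ≤ G 1 := hG1
    _ = ‖f ω‖ ^ 2 + ∫ s in (0:ℝ)..1, ‖fderiv ℝ f (s • ω) ω‖ ^ 2 * s ^ 2 := by
        simp only [hG, one_pow, one_smul, one_mul, hfinal]
end

section
/- For every a ∈ ℝ, the function v_a(t,x) := √2/(t + a(t² − |x|²)) is twice continuously differentiable and satisfies the cubic focusing wave equation (−∂_t² + Δ_x)v_a + v_a³ = 0 on the open set {(t,x) ∈ ℝ × ℝ³ : t + a(t² − |x|²) ≠ 0}. -/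
noncomputable section

/-- Spacetime `ℝ × ℝ³`. -/
abbrev Spc : Type := ℝ × EuclideanSpace ℝ (Fin 3)

/-- Directional derivative in the direction `w`. -/
noncomputable def dirDeriv (w : Spc) (v : Spc → ℝ) (p : Spc) : ℝ := fderiv ℝ v p w

/-- Second time derivative. -/
noncomputable def dtt (v : Spc → ℝ) : Spc → ℝ :=
  dirDeriv (1, 0) (dirDeriv (1, 0) v)

/-- Spatial Laplacian. -/
noncomputable def lap (v : Spc → ℝ) (p : Spc) : ℝ :=
  ∑ j : Fin 3, dirDeriv (0, EuclideanSpace.single j 1)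
    (dirDeriv (0, EuclideanSpace.single j 1) v) p

abbrev E3 : Type := EuclideanSpace ℝ (Fin 3)

lemma denomHasFDerivAt (a : ℝ) (p : Spc) :
    HasFDerivAt (fun q : Spc => q.1 + a * (q.1 ^ 2 - ‖q.2‖ ^ 2))
      ((1 + 2 * a * p.1) • ContinuousLinearMap.fst ℝ ℝ E3
        - (2 * a) • ((innerSL ℝ p.2).comp (ContinuousLinearMap.snd ℝ ℝ E3))) p := by
  have h1 : HasFDerivAt (fun q : Spc => q.1) (ContinuousLinearMap.fst ℝ ℝ E3) p :=
    hasFDerivAt_fst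
  have h2 : HasFDerivAt (fun q : Spc => q.2) (ContinuousLinearMap.snd ℝ ℝ E3) p :=
    hasFDerivAt_snd
  have h3 := h2.norm_sq
  have h4 : HasFDerivAt (fun q : Spc => q.1 ^ 2)
      (p.1 • ContinuousLinearMap.fst ℝ ℝ E3 + p.1 • ContinuousLinearMap.fst ℝ ℝ E3) p := by
    have := h1.fun_mul h1
    simpa [pow_two] using this
  have h5 := h1.fun_add ((h4.fun_sub h3).const_mul a)
  refine h5.congr_fderiv ?_
  refine ContinuousLinearMap.ext fun w => ?_
  simp [real_inner_comm, two_smul]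
  ring

lemma vHasFDerivAt (a : ℝ) (p : Spc) (hp : p.1 + a * (p.1 ^ 2 - ‖p.2‖ ^ 2) ≠ 0) :
    HasFDerivAt (fun q : Spc => Real.sqrt 2 / (q.1 + a * (q.1 ^ 2 - ‖q.2‖ ^ 2)))
      ((-Real.sqrt 2 / (p.1 + a * (p.1 ^ 2 - ‖p.2‖ ^ 2)) ^ 2) •
        ((1 + 2 * a * p.1) • ContinuousLinearMap.fst ℝ ℝ E3
          - (2 * a) • ((innerSL ℝ p.2).comp (ContinuousLinearMap.snd ℝ ℝ E3)))) p := by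
  have hg : HasDerivAt (fun y : ℝ => Real.sqrt 2 * y⁻¹)
      (Real.sqrt 2 * (-((p.1 + a * (p.1 ^ 2 - ‖p.2‖ ^ 2)) ^ 2)⁻¹))
      (p.1 + a * (p.1 ^ 2 - ‖p.2‖ ^ 2)) := by
    simpa using (hasDerivAt_inv hp).const_mul (Real.sqrt 2)
  have h := hg.comp_hasFDerivAt p (denomHasFDerivAt a p)
  simp only [div_eq_mul_inv, neg_mul] at h ⊢
  refine h.congr_fderiv ?_
  congr 1
  ring

lemma dir_eq (a : ℝ) (w : Spc) (p : Spc) (hp : p.1 + a * (p.1 ^ 2 - ‖p.2‖ ^ 2) ≠ 0) :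
    dirDeriv w (fun q : Spc => Real.sqrt 2 / (q.1 + a * (q.1 ^ 2 - ‖q.2‖ ^ 2))) p
      = (-Real.sqrt 2 / (p.1 + a * (p.1 ^ 2 - ‖p.2‖ ^ 2)) ^ 2) *
        ((1 + 2 * a * p.1) * w.1 - 2 * a * (inner ℝ p.2 w.2 : ℝ)) := by
  rw [dirDeriv, (vHasFDerivAt a p hp).fderiv]
  simp [real_inner_comm]

lemma denom_contDiff (a : ℝ) :
    ContDiff ℝ 2 (fun q : Spc => q.1 + a * (q.1 ^ 2 - ‖q.2‖ ^ 2)) := by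
  have h2 : ContDiff ℝ 2 (fun q : Spc => ‖q.2‖ ^ 2) :=
    (contDiff_norm_sq ℝ (n := 2)).comp contDiff_snd
  exact contDiff_fst.add (contDiff_const.mul ((contDiff_fst.pow 2).sub h2))

lemma isOpen_s (a : ℝ) : IsOpen {q : Spc | q.1 + a * (q.1 ^ 2 - ‖q.2‖ ^ 2) ≠ 0} :=
  isOpen_ne.preimage (denom_contDiff a).continuous

lemma dir2 (a : ℝ) (w : Spc) (p : Spc) (hp : p.1 + a * (p.1 ^ 2 - ‖p.2‖ ^ 2) ≠ 0) :
    dirDeriv w (dirDeriv w (fun q : Spc => Real.sqrt 2 / (q.1 + a * (q.1 ^ 2 - ‖q.2‖ ^ 2)))) p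
      = (-Real.sqrt 2 * (2 * a * w.1 ^ 2 - 2 * a * ‖w.2‖ ^ 2))
          / (p.1 + a * (p.1 ^ 2 - ‖p.2‖ ^ 2)) ^ 2
        + 2 * Real.sqrt 2 * ((1 + 2 * a * p.1) * w.1 - 2 * a * (inner ℝ p.2 w.2 : ℝ)) ^ 2
          / (p.1 + a * (p.1 ^ 2 - ‖p.2‖ ^ 2)) ^ 3 := by
  set f : Spc → ℝ := fun q => q.1 + a * (q.1 ^ 2 - ‖q.2‖ ^ 2) with hf
  -- the explicit first derivative function
  set G : Spc → ℝ := fun q =>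
    (-Real.sqrt 2 / (f q) ^ 2) * ((1 + 2 * a * q.1) * w.1 - 2 * a * (inner ℝ q.2 w.2 : ℝ))
    with hG
  have hev : dirDeriv w (fun q : Spc => Real.sqrt 2 / f q) =ᶠ[nhds p] G := by
    filter_upwards [(isOpen_s a).mem_nhds hp] with q hq using dir_eq a w q hq
  -- derivative of u := -√2 / f^2
  have hgu : HasDerivAt (fun y : ℝ => -Real.sqrt 2 / y ^ 2)
      (-Real.sqrt 2 * (-(2 * f p ^ 1) / (f p ^ 2) ^ 2)) (f p) := by
    have h0 := ((hasDerivAt_pow 2 (f p)).inv (pow_ne_zero 2 hp)).const_mul (-Real.sqrt 2)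
    simpa [div_eq_mul_inv] using h0
  have hu := hgu.comp_hasFDerivAt p (denomHasFDerivAt a p)
  -- derivative of N := (1 + 2a q.1) w.1 - 2a ⟪q.2, w.2⟫
  have hCfun : (fun q : Spc => (inner ℝ q.2 w.2 : ℝ))
      = fun q => ((innerSL ℝ w.2).comp (ContinuousLinearMap.snd ℝ ℝ E3)) q :=
    funext fun q => by rw [real_inner_comm]; rfl
  have hC : HasFDerivAt (fun q : Spc => (inner ℝ q.2 w.2 : ℝ))
      ((innerSL ℝ w.2).comp (ContinuousLinearMap.snd ℝ ℝ E3)) p := by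
    rw [hCfun]; exact ((innerSL ℝ w.2).comp (ContinuousLinearMap.snd ℝ ℝ E3)).hasFDerivAt
  have hN : HasFDerivAt (fun q : Spc => (1 + 2 * a * q.1) * w.1 - 2 * a * (inner ℝ q.2 w.2 : ℝ))
      (w.1 • ((2 * a) • ContinuousLinearMap.fst ℝ ℝ E3)
        - (2 * a) • ((innerSL ℝ w.2).comp (ContinuousLinearMap.snd ℝ ℝ E3))) p := by
    exact ((((hasFDerivAt_fst (p := p)).const_mul (2 * a)).const_add 1).mul_const w.1).fun_sub
      (hC.const_mul (2 * a))
  have hGd := hu.fun_mul hN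
  rw [dirDeriv, hev.fderiv_eq]
  have h2 : fderiv ℝ G p = _ := hGd.fderiv
  rw [h2]
  simp only [ContinuousLinearMap.add_apply, ContinuousLinearMap.smul_apply,
    ContinuousLinearMap.sub_apply, ContinuousLinearMap.coe_fst',
    ContinuousLinearMap.comp_apply, ContinuousLinearMap.coe_snd',
    innerSL_apply_apply, Function.comp_apply, smul_eq_mul, pow_one]
  rw [real_inner_comm w.2 w.2, real_inner_self_eq_norm_sq,
    real_inner_comm w.2 p.2, real_inner_comm p.2 w.2]
  rw [show f p = p.1 + a * (p.1 ^ 2 - ‖p.2‖ ^ 2) from rfl]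
  field_simp

/-- For every `a ∈ ℝ`, `v_a(t,x) = √2/(t + a(t² - |x|²))` is a `C²` solution of the
cubic focusing wave equation `(-∂_t² + Δ)v + v³ = 0` on the open set where the
denominator does not vanish. -/
theorem stmt6 (a : ℝ) (v : Spc → ℝ)
    (hv : v = fun p : Spc => Real.sqrt 2 / (p.1 + a * (p.1 ^ 2 - ‖p.2‖ ^ 2))) :
    ContDiffOn ℝ 2 v {p : Spc | p.1 + a * (p.1 ^ 2 - ‖p.2‖ ^ 2) ≠ 0} ∧
      ∀ p ∈ {p : Spc | p.1 + a * (p.1 ^ 2 - ‖p.2‖ ^ 2) ≠ 0},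
        -dtt v p + lap v p + (v p) ^ 3 = 0 := by
  subst hv
  constructor
  · exact ContDiffOn.div contDiffOn_const ((denom_contDiff a).contDiffOn) (fun p hp => hp)
  · intro p hp
    simp only [Set.mem_setOf_eq] at hp
    have hc2 : Real.sqrt 2 ^ 2 = 2 := Real.sq_sqrt (by norm_num)
    have hc3 : Real.sqrt 2 ^ 3 = 2 * Real.sqrt 2 := by
      rw [pow_succ, hc2]
    have hdtt := dir2 a ((1 : ℝ), (0 : E3)) p hp
    simp only [norm_zero, inner_zero_right] at hdtt
    have hlap : ∀ j : Fin 3,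
        dirDeriv (0, EuclideanSpace.single j 1)
          (dirDeriv (0, EuclideanSpace.single j 1)
            (fun q : Spc => Real.sqrt 2 / (q.1 + a * (q.1 ^ 2 - ‖q.2‖ ^ 2)))) p
        = (-Real.sqrt 2 * (2 * a * 0 ^ 2 - 2 * a * 1 ^ 2))
            / (p.1 + a * (p.1 ^ 2 - ‖p.2‖ ^ 2)) ^ 2
          + 2 * Real.sqrt 2 * ((1 + 2 * a * p.1) * 0 - 2 * a * p.2 j) ^ 2
            / (p.1 + a * (p.1 ^ 2 - ‖p.2‖ ^ 2)) ^ 3 := by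
      intro j
      have h := dir2 a ((0 : ℝ), EuclideanSpace.single j (1 : ℝ)) p hp
      have h1 : ‖EuclideanSpace.single j (1 : ℝ)‖ = 1 := by
        rw [EuclideanSpace.norm_single]; norm_num
      have h2 : (inner ℝ p.2 (EuclideanSpace.single j (1 : ℝ)) : ℝ) = p.2 j := by
        rw [EuclideanSpace.inner_single_right]; simp
      rw [h1, h2] at h
      exact h
    have hlap2 : ∀ j : Fin 3,
        dirDeriv (0, EuclideanSpace.single j 1)
          (dirDeriv (0, EuclideanSpace.single j 1)
            (fun q : Spc => Real.sqrt 2 / (q.1 + a * (q.1 ^ 2 - ‖q.2‖ ^ 2)))) p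
        = (p.2 j) ^ 2 * (8 * a ^ 2 * Real.sqrt 2 / (p.1 + a * (p.1 ^ 2 - ‖p.2‖ ^ 2)) ^ 3)
          + 2 * a * Real.sqrt 2 / (p.1 + a * (p.1 ^ 2 - ‖p.2‖ ^ 2)) ^ 2 := by
      intro j
      rw [hlap j]
      field_simp
      ring
    have hsum : ∑ j : Fin 3, (p.2 j) ^ 2 = ‖p.2‖ ^ 2 := by
      rw [EuclideanSpace.norm_eq, Real.sq_sqrt (by positivity)]
      simp [Real.norm_eq_abs, sq_abs]
    simp only [dtt, lap]
    rw [hdtt, Finset.sum_congr rfl (fun j _ => hlap2 j)]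
    rw [Finset.sum_add_distrib, Finset.sum_const, ← Finset.sum_mul, hsum]
    rw [div_pow, hc3, Finset.card_univ, Fintype.card_fin, nsmul_eq_mul]
    field_simp
    ring
end
end

section
/- Let ℓ ∈ ℕ₀ and define φ : (0,1) → ℝ by φ(z) := [ (1 − √(1−z))^{−ℓ−1/2} − (1 + √(1−z))^{−ℓ−1/2} ] / ( (2ℓ+1)√(1−z) ). Then φ is twice continuously differentiable on (0,1) and satisfies the hypergeometric differential equation z(1−z)φ''(z) + [c − (a+b+1)z]φ'(z) − a·b·φ(z) = 0 on (0,1), with parameters a = (3+2ℓ)/4, b = (5+2ℓ)/4, c = (3+2ℓ)/2. In particular |φ(z)| → ∞ as z → 0+. -/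
set_option maxHeartbeats 1000000

open Set Filter

/-- The elementary closed-form function
`φ(z) = [(1-√(1-z))^{-ℓ-1/2} - (1+√(1-z))^{-ℓ-1/2}] / ((2ℓ+1)√(1-z))`
is twice continuously differentiable on `(0,1)`, solves the hypergeometric
equation with `a = (3+2ℓ)/4`, `b = (5+2ℓ)/4`, `c = (3+2ℓ)/2`, and blows up as
`z → 0+`. -/
theorem stmt11 (ℓ : ℕ) (φ : ℝ → ℝ)
    (hφ : φ = fun z : ℝ =>
      ((1 - Real.sqrt (1 - z)) ^ (-(ℓ:ℝ) - 1/2)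
        - (1 + Real.sqrt (1 - z)) ^ (-(ℓ:ℝ) - 1/2)) /
      ((2 * ℓ + 1) * Real.sqrt (1 - z))) :
    ContDiffOn ℝ 2 φ (Ioo 0 1) ∧
    (∀ z ∈ Ioo (0:ℝ) 1,
      z * (1 - z) * deriv (deriv φ) z
        + ((3 + 2 * ℓ)/2 - ((3 + 2 * ℓ)/4 + (5 + 2 * ℓ)/4 + 1) * z) * deriv φ z
        - ((3 + 2 * ℓ)/4) * ((5 + 2 * ℓ)/4) * φ z = 0) ∧
    Tendsto (fun z => |φ z|) (nhdsWithin 0 (Ioi 0)) atTop := by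
  set α : ℝ := -(ℓ:ℝ) - 1/2 with hα
  set c2 : ℝ := 2 * (ℓ:ℝ) + 1 with hc2
  have hc2pos : (0:ℝ) < c2 := by rw [hc2]; positivity
  set D : ℝ → ℝ := fun z =>
    ((1 - Real.sqrt (1-z)) ^ (α-1) * (α * Real.sqrt (1-z) + 1 - Real.sqrt (1-z))
     + (1 + Real.sqrt (1-z)) ^ (α-1) * (α * Real.sqrt (1-z) - 1 - Real.sqrt (1-z)))
    / (2 * c2 * Real.sqrt (1-z) ^ 3) with hD
  set E : ℝ → ℝ := fun z =>
    (α*(α-1) * ((1 - Real.sqrt (1-z)) ^ (α-2) - (1 + Real.sqrt (1-z)) ^ (α-2)) * (1-z)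
     + 3 * ((1 - Real.sqrt (1-z)) ^ (α-2) * (1 - Real.sqrt (1-z)) * (α * Real.sqrt (1-z) + 1 - Real.sqrt (1-z))
          + (1 + Real.sqrt (1-z)) ^ (α-2) * (1 + Real.sqrt (1-z)) * (α * Real.sqrt (1-z) - 1 - Real.sqrt (1-z))))
    / (4 * c2 * Real.sqrt (1-z) ^ 5) with hE
  -- basic facts
  have hfacts : ∀ z ∈ Ioo (0:ℝ) 1, 0 < 1 - z ∧ 0 < Real.sqrt (1-z) ∧ Real.sqrt (1-z) < 1 := by
    intro z hz
    have h1z : (0:ℝ) < 1 - z := by linarith [hz.2]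
    refine ⟨h1z, Real.sqrt_pos.mpr h1z, ?_⟩
    have h := Real.sqrt_lt_sqrt h1z.le (by linarith [hz.1] : 1 - z < 1)
    simpa using h
  have hDer1 : ∀ z ∈ Ioo (0:ℝ) 1, HasDerivAt φ (D z) z := by
    intro z hz
    obtain ⟨h1z, hspos, hslt⟩ := hfacts z hz
    set s := Real.sqrt (1-z) with hs
    have h1ms : (0:ℝ) < 1 - s := by linarith
    have h1ps : (0:ℝ) < 1 + s := by linarith
    have hds : HasDerivAt (fun z => Real.sqrt (1-z)) (1/(2*s) * (-1)) z :=
      (Real.hasDerivAt_sqrt h1z.ne').comp z ((hasDerivAt_id z).const_sub 1)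
    have h1 : HasDerivAt (fun z => 1 - Real.sqrt (1-z)) (-(1/(2*s) * (-1))) z := hds.const_sub 1
    have h2 := h1.rpow_const (p := α) (Or.inl h1ms.ne')
    have h3 : HasDerivAt (fun z => 1 + Real.sqrt (1-z)) (1/(2*s) * (-1)) z := hds.const_add 1
    have h4 := h3.rpow_const (p := α) (Or.inl h1ps.ne')
    have h5 := h2.sub h4
    have hden : HasDerivAt (fun z => c2 * Real.sqrt (1-z)) (c2 * (1/(2*s) * (-1))) z :=
      hds.const_mul c2
    have hdiv := h5.div hden (by positivity)
    rw [hφ]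
    refine hdiv.congr_deriv ?_
    have f1 : (1-s)^α = (1-s)^(α-1) * (1-s) := by
      nth_rewrite 1 [show α = (α-1)+1 by ring]
      rw [Real.rpow_add_one h1ms.ne']
    have f3 : (1+s)^α = (1+s)^(α-1) * (1+s) := by
      nth_rewrite 1 [show α = (α-1)+1 by ring]
      rw [Real.rpow_add_one h1ps.ne']
    simp only [Pi.sub_apply, Pi.add_apply, Pi.mul_apply, ← hs]
    simp only [hD, f1, f3]
    field_simp
    ring
  have hDer2 : ∀ z ∈ Ioo (0:ℝ) 1, HasDerivAt D (E z) z := by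
    intro z hz
    obtain ⟨h1z, hspos, hslt⟩ := hfacts z hz
    set s := Real.sqrt (1-z) with hs
    have h1ms : (0:ℝ) < 1 - s := by linarith
    have h1ps : (0:ℝ) < 1 + s := by linarith
    have hds : HasDerivAt (fun z => Real.sqrt (1-z)) (1/(2*s) * (-1)) z :=
      (Real.hasDerivAt_sqrt h1z.ne').comp z ((hasDerivAt_id z).const_sub 1)
    have h1 : HasDerivAt (fun z => 1 - Real.sqrt (1-z)) (-(1/(2*s) * (-1))) z := hds.const_sub 1
    have h2 := h1.rpow_const (p := α - 1) (Or.inl h1ms.ne')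
    have h3 : HasDerivAt (fun z => 1 + Real.sqrt (1-z)) (1/(2*s) * (-1)) z := hds.const_add 1
    have h4 := h3.rpow_const (p := α - 1) (Or.inl h1ps.ne')
    have hm1 : HasDerivAt (fun z => α * Real.sqrt (1-z) + 1 - Real.sqrt (1-z))
        (α * (1/(2*s) * (-1)) - 1/(2*s) * (-1)) z :=
      (((hds.const_mul α).add_const 1).sub hds)
    have hm2 : HasDerivAt (fun z => α * Real.sqrt (1-z) - 1 - Real.sqrt (1-z))
        (α * (1/(2*s) * (-1)) - 1/(2*s) * (-1)) z :=
      (((hds.const_mul α).sub_const 1).sub hds)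
    have hnum := (h2.mul hm1).add (h4.mul hm2)
    have hden : HasDerivAt (fun z => 2 * c2 * Real.sqrt (1-z) ^ 3)
        (2 * c2 * (3 * Real.sqrt (1-z) ^ 2 * (1/(2*s) * (-1)))) z :=
      (hds.pow 3).const_mul (2 * c2)
    have hdiv := hnum.div hden (by positivity)
    refine hdiv.congr_deriv ?_
    have f2 : (1-s)^(α-1) = (1-s)^(α-2) * (1-s) := by
      nth_rewrite 1 [show α - 1 = (α-2)+1 by ring]
      rw [Real.rpow_add_one h1ms.ne']
    have f4 : (1+s)^(α-1) = (1+s)^(α-2) * (1+s) := by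
      nth_rewrite 1 [show α - 1 = (α-2)+1 by ring]
      rw [Real.rpow_add_one h1ps.ne']
    have hz2 : 1 - z = s ^ 2 := (Real.sq_sqrt h1z.le).symm
    simp only [hE, f2, f4]
    simp only [Pi.sub_apply, Pi.add_apply, Pi.mul_apply, ← hs, f2, f4]
    rw [hz2]
    field_simp
    ring
  refine ⟨?_, ?_, ?_⟩
  · -- smoothness
    intro z hz
    obtain ⟨h1z, hspos, hslt⟩ := hfacts z hz
    have hsq : ContDiffAt ℝ 2 (fun z : ℝ => Real.sqrt (1-z)) z :=
      (Real.contDiffAt_sqrt h1z.ne').comp z ((contDiff_const.sub contDiff_id).contDiffAt)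
    have h1c : ContDiffAt ℝ 2 (fun z : ℝ => (1 - Real.sqrt (1-z)) ^ α) z :=
      (contDiffAt_const.sub hsq).rpow_const_of_ne (by show (1:ℝ) - Real.sqrt (1-z) ≠ 0; linarith)
    have h2c : ContDiffAt ℝ 2 (fun z : ℝ => (1 + Real.sqrt (1-z)) ^ α) z :=
      (contDiffAt_const.add hsq).rpow_const_of_ne (by show (1:ℝ) + Real.sqrt (1-z) ≠ 0; linarith)
    have hdc : ContDiffAt ℝ 2 (fun z : ℝ => c2 * Real.sqrt (1-z)) z := contDiffAt_const.mul hsq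
    rw [hφ]
    exact (((h1c.sub h2c).div hdc (by positivity)).contDiffWithinAt)
  · -- ODE
    intro z hz
    obtain ⟨h1z, hspos, hslt⟩ := hfacts z hz
    have hdφ : EqOn (deriv φ) D (Ioo 0 1) := fun t ht => (hDer1 t ht).deriv
    have hev : deriv φ =ᶠ[nhds z] D :=
      Filter.eventuallyEq_of_mem (isOpen_Ioo.mem_nhds hz) hdφ
    have hd2 : deriv (deriv φ) z = E z := by
      rw [hev.deriv_eq]
      exact (hDer2 z hz).deriv
    rw [hd2, hdφ hz, hφ]
    simp only [hD, hE]
    set s := Real.sqrt (1-z) with hs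
    have h1ms : (0:ℝ) < 1 - s := by linarith
    have h1ps : (0:ℝ) < 1 + s := by linarith
    have hzeq : z = 1 - s ^ 2 := by rw [hs, Real.sq_sqrt h1z.le]; ring
    have f1 : (1-s)^α = (1-s)^(α-1) * (1-s) := by
      nth_rewrite 1 [show α = (α-1)+1 by ring]
      rw [Real.rpow_add_one h1ms.ne']
    have f3 : (1+s)^α = (1+s)^(α-1) * (1+s) := by
      nth_rewrite 1 [show α = (α-1)+1 by ring]
      rw [Real.rpow_add_one h1ps.ne']
    have f2 : (1-s)^(α-1) = (1-s)^(α-2) * (1-s) := by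
      nth_rewrite 1 [show α - 1 = (α-2)+1 by ring]
      rw [Real.rpow_add_one h1ms.ne']
    have f4 : (1+s)^(α-1) = (1+s)^(α-2) * (1+s) := by
      nth_rewrite 1 [show α - 1 = (α-2)+1 by ring]
      rw [Real.rpow_add_one h1ps.ne']
    rw [f1, f3, f2, f4, hzeq, hα, hc2]
    have hsne : s ≠ 0 := by positivity
    have hl1 : (2 * (ℓ:ℝ) + 1) ≠ 0 := by positivity
    field_simp
    ring
  · -- blowup
    have hAt : Tendsto (fun t : ℝ => t ^ α) (nhdsWithin 0 (Ioi 0)) atTop := by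
      have h1 : Tendsto (fun t : ℝ => (t⁻¹) ^ (-α)) (nhdsWithin 0 (Ioi 0)) atTop :=
        (tendsto_rpow_atTop (by rw [hα]; push_cast; linarith)).comp tendsto_inv_nhdsGT_zero
      refine h1.congr' ?_
      filter_upwards [self_mem_nhdsWithin] with t ht
      have ht' : (0:ℝ) < t := ht
      show (t⁻¹) ^ (-α) = t ^ α
      rw [Real.inv_rpow ht'.le, Real.rpow_neg ht'.le, inv_inv]
    have hinner : Tendsto (fun z : ℝ => 1 - Real.sqrt (1-z)) (nhdsWithin 0 (Ioi 0))
        (nhdsWithin 0 (Ioi 0)) := by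
      rw [tendsto_nhdsWithin_iff]
      constructor
      · have hc : ContinuousAt (fun z : ℝ => 1 - Real.sqrt (1-z)) 0 :=
          continuousAt_const.sub ((Real.continuous_sqrt.comp (continuous_const.sub continuous_id)).continuousAt)
        exact tendsto_nhdsWithin_of_tendsto_nhds (by simpa using hc.tendsto)
      · filter_upwards [Ioo_mem_nhdsGT_of_mem (by norm_num : (0:ℝ) ∈ Ico 0 1)] with t ht
        have := (hfacts t ht).2.2
        simp only [mem_Ioi]; linarith
    have hA : Tendsto (fun z : ℝ => (1 - Real.sqrt (1-z)) ^ α) (nhdsWithin 0 (Ioi 0)) atTop :=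
      hAt.comp hinner
    have hL : Tendsto (fun z : ℝ => ((1 - Real.sqrt (1-z)) ^ α - 1) / c2)
        (nhdsWithin 0 (Ioi 0)) atTop :=
      Tendsto.atTop_div_const hc2pos (tendsto_atTop_add_const_right _ (-1) hA)
    have hmono : ∀ᶠ z in nhdsWithin (0:ℝ) (Ioi 0),
        ((1 - Real.sqrt (1-z)) ^ α - 1) / c2 ≤ φ z := by
      filter_upwards [Ioo_mem_nhdsGT_of_mem (by norm_num : (0:ℝ) ∈ Ico 0 1),
        hA.eventually_ge_atTop 2] with z hz hA1
      obtain ⟨h1z, hspos, hslt⟩ := hfacts z hz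
      rw [hφ]
      simp only
      have hBle : (1 + Real.sqrt (1-z)) ^ α ≤ 1 :=
        Real.rpow_le_one_of_one_le_of_nonpos (by linarith)
          (by rw [hα]; have : (0:ℝ) ≤ (ℓ:ℝ) := Nat.cast_nonneg ℓ; linarith)
      have hs1 : c2 * Real.sqrt (1-z) ≤ c2 * 1 := by
        apply mul_le_mul_of_nonneg_left hslt.le hc2pos.le
      have hnum : (0:ℝ) < (1 - Real.sqrt (1-z)) ^ α - 1 := by linarith
      calc ((1 - Real.sqrt (1-z)) ^ α - 1) / c2
          ≤ ((1 - Real.sqrt (1-z)) ^ α - 1) / (c2 * Real.sqrt (1-z)) := by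
            refine (div_le_div_iff_of_pos_left ?_ ?_ ?_).mpr (by linarith) <;> positivity
        _ ≤ ((1 - Real.sqrt (1-z)) ^ α - (1 + Real.sqrt (1-z)) ^ α) / (c2 * Real.sqrt (1-z)) := by
            refine (div_le_div_iff_of_pos_right (by positivity)).mpr (by linarith)
    have hφt : Tendsto φ (nhdsWithin 0 (Ioi 0)) atTop := tendsto_atTop_mono' _ hmono hL
    exact (tendsto_abs_atTop_atTop).comp hφt
end

section
/- Let ℓ ∈ ℕ₀, λ ∈ ℂ, and let v : (0,1) → ℂ be twice continuously differentiable. Define u : (0,1) → ℂ by u(ρ) := ρ^ℓ v(ρ²). Then u satisfies −(1−ρ²)u''(ρ) − (2/ρ)u'(ρ) + 2(λ+2)ρ u'(ρ) + [(λ+1)(λ+2) − 6] u(ρ) + (ℓ(ℓ+1)/ρ²) u(ρ) = 0 for all ρ ∈ (0,1) if and only if v satisfies the hypergeometric differential equation z(1−z)v''(z) + [c − (a+b+1)z] v'(z) − a·b·v(z) = 0 for all z ∈ (0,1), where a = (−1+ℓ+λ)/2, b = (4+ℓ+λ)/2, c = 3/2 + ℓ. -/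
open Set

private lemma key_alg (ℓ : ℕ) (lam r V V1 V2 : ℂ) (hr : r ≠ 0) :
    -(1 - r^2) * ((ℓ:ℂ)*((ℓ-1:ℕ):ℂ)*r^(ℓ-1-1)*V + (ℓ:ℂ)*r^(ℓ-1)*(2*r)*V1
        + ((ℓ:ℂ)*r^(ℓ-1)*(2*r)+r^ℓ*2)*V1 + r^ℓ*(2*r)*((2*r)*V2))
      - (2/r) * ((ℓ:ℂ)*r^(ℓ-1)*V + r^ℓ*(2*r)*V1)
      + 2*(lam+2)*r*((ℓ:ℂ)*r^(ℓ-1)*V + r^ℓ*(2*r)*V1)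
      + ((lam+1)*(lam+2)-6)*(r^ℓ*V)
      + ((ℓ:ℂ)*((ℓ:ℂ)+1)/r^2)*(r^ℓ*V)
    = (-4) * r^ℓ * (r^2*(1-r^2)*V2
        + ((3/2+(ℓ:ℂ)) - (((-1+(ℓ:ℂ)+lam)/2)+((4+(ℓ:ℂ)+lam)/2)+1)*r^2)*V1
        - ((-1+(ℓ:ℂ)+lam)/2)*((4+(ℓ:ℂ)+lam)/2)*V) := by
  match ℓ with
  | 0 => push_cast; field_simp; ring
  | 1 => push_cast; field_simp; ring
  | (m+2) =>
    simp only [show m+2-1-1 = m from rfl, show m+2-1 = m+1 from rfl]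
    push_cast
    simp only [pow_succ]
    field_simp
    ring

/-- The substitution `u(ρ) = ρ^ℓ v(ρ²)` transforms the spectral ODE
`-(1-ρ²)u'' - (2/ρ)u' + 2(λ+2)ρu' + [(λ+1)(λ+2)-6]u + (ℓ(ℓ+1)/ρ²)u = 0` on `(0,1)`
into the hypergeometric equation `z(1-z)v'' + [c-(a+b+1)z]v' - ab·v = 0` with
`a = (-1+ℓ+λ)/2`, `b = (4+ℓ+λ)/2`, `c = 3/2+ℓ`, and conversely. -/
theorem stmt12 (ℓ : ℕ) (lam : ℂ) (v : ℝ → ℂ) (hv : ContDiffOn ℝ 2 v (Ioo 0 1))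
    (u : ℝ → ℂ) (hu : u = fun ρ : ℝ => (ρ:ℂ)^ℓ * v (ρ^2)) :
    (∀ ρ ∈ Ioo (0:ℝ) 1,
      -(1 - (ρ:ℂ)^2) * deriv (deriv u) ρ - (2 / (ρ:ℂ)) * deriv u ρ
        + 2 * (lam + 2) * (ρ:ℂ) * deriv u ρ
        + ((lam + 1) * (lam + 2) - 6) * u ρ
        + ((ℓ:ℂ) * ((ℓ:ℂ) + 1) / (ρ:ℂ)^2) * u ρ = 0) ↔
    (∀ z ∈ Ioo (0:ℝ) 1,
      (z:ℂ) * (1 - (z:ℂ)) * deriv (deriv v) z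
        + ((3/2 + (ℓ:ℂ)) - (((-1 + (ℓ:ℂ) + lam)/2) + ((4 + (ℓ:ℂ) + lam)/2) + 1) * (z:ℂ))
          * deriv v z
        - ((-1 + (ℓ:ℂ) + lam)/2) * ((4 + (ℓ:ℂ) + lam)/2) * v z = 0) := by
  have hO : IsOpen (Ioo (0:ℝ) 1) := isOpen_Ioo
  have hvd : ∀ z ∈ Ioo (0:ℝ) 1, HasDerivAt v (deriv v z) z := fun z hz =>
    ((hv.differentiableOn (by norm_num)).differentiableAt (hO.mem_nhds hz)).hasDerivAt
  have hv1 : ContDiffOn ℝ 1 (deriv v) (Ioo 0 1) := hv.deriv_of_isOpen hO (by norm_num)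
  have hv1d : ∀ z ∈ Ioo (0:ℝ) 1, HasDerivAt (deriv v) (deriv (deriv v) z) z := fun z hz =>
    ((hv1.differentiableOn (by norm_num)).differentiableAt (hO.mem_nhds hz)).hasDerivAt
  set u1 : ℝ → ℂ := fun ρ => (ℓ:ℂ) * (ρ:ℂ)^(ℓ-1) * v (ρ^2)
      + (ρ:ℂ)^ℓ * (2*(ρ:ℂ)) * deriv v (ρ^2) with hu1
  set u2 : ℝ → ℂ := fun ρ => (ℓ:ℂ) * ((ℓ-1:ℕ):ℂ) * (ρ:ℂ)^(ℓ-1-1) * v (ρ^2)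
      + (ℓ:ℂ) * (ρ:ℂ)^(ℓ-1) * (2*(ρ:ℂ)) * deriv v (ρ^2)
      + ((ℓ:ℂ) * (ρ:ℂ)^(ℓ-1) * (2*(ρ:ℂ)) + (ρ:ℂ)^ℓ * 2) * deriv v (ρ^2)
      + (ρ:ℂ)^ℓ * (2*(ρ:ℂ)) * ((2*(ρ:ℂ)) * deriv (deriv v) (ρ^2)) with hu2
  have hsq : ∀ ρ ∈ Ioo (0:ℝ) 1, ρ^2 ∈ Ioo (0:ℝ) 1 := by
    intro ρ hρ
    exact ⟨pow_pos hρ.1 2, by nlinarith [hρ.1, hρ.2]⟩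
  have hud : ∀ ρ ∈ Ioo (0:ℝ) 1, HasDerivAt u (u1 ρ) ρ := by
    intro ρ hρ
    have h1 : HasDerivAt (fun x:ℝ => ((x:ℂ))^ℓ) ((ℓ:ℂ) * (ρ:ℂ)^(ℓ-1)) ρ :=
      (hasDerivAt_pow ℓ (ρ:ℂ)).comp_ofReal
    have h2 : HasDerivAt (fun x:ℝ => v (x^2)) ((2*ρ) • deriv v (ρ^2)) ρ := by
      have := HasDerivAt.scomp_of_eq ρ (hvd _ (hsq ρ hρ)) (hasDerivAt_pow 2 ρ) rfl
      simpa [Function.comp_def] using this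
    rw [hu]
    convert h1.mul h2 using 1
    · rfl
    · rfl
    simp [u1, Complex.real_smul]
    ring
  have hu1d : ∀ ρ ∈ Ioo (0:ℝ) 1, HasDerivAt u1 (u2 ρ) ρ := by
    intro ρ hρ
    have h1 : HasDerivAt (fun x:ℝ => (ℓ:ℂ) * ((x:ℂ))^(ℓ-1))
        ((ℓ:ℂ) * (((ℓ-1:ℕ):ℂ) * (ρ:ℂ)^(ℓ-1-1))) ρ :=
      ((hasDerivAt_pow (ℓ-1) (ρ:ℂ)).comp_ofReal).const_mul (ℓ:ℂ)
    have h2 : HasDerivAt (fun x:ℝ => v (x^2)) ((2*ρ) • deriv v (ρ^2)) ρ := by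
      simpa [Function.comp_def] using HasDerivAt.scomp_of_eq ρ (hvd _ (hsq ρ hρ)) (hasDerivAt_pow 2 ρ) rfl
    have h3 : HasDerivAt (fun x:ℝ => deriv v (x^2)) ((2*ρ) • deriv (deriv v) (ρ^2)) ρ := by
      simpa [Function.comp_def] using HasDerivAt.scomp_of_eq ρ (hv1d _ (hsq ρ hρ)) (hasDerivAt_pow 2 ρ) rfl
    have h4 : HasDerivAt (fun x:ℝ => ((x:ℂ))^ℓ * (2*(x:ℂ)))
        ((ℓ:ℂ) * (ρ:ℂ)^(ℓ-1) * (2*(ρ:ℂ)) + (ρ:ℂ)^ℓ * 2) ρ := by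
      have ha : HasDerivAt (fun x:ℝ => ((x:ℂ))^ℓ) ((ℓ:ℂ) * (ρ:ℂ)^(ℓ-1)) ρ :=
        (hasDerivAt_pow ℓ (ρ:ℂ)).comp_ofReal
      have hb : HasDerivAt (fun x:ℝ => (2*(x:ℂ))) 2 ρ := by
        simpa using ((hasDerivAt_id (ρ:ℂ)).const_mul 2).comp_ofReal
      exact ha.mul hb
    have := (h1.mul h2).add (h4.mul h3)
    convert this using 1
    · rfl
    · rfl
    simp [u2, Complex.real_smul]
    ring
  have hd1 : ∀ ρ ∈ Ioo (0:ℝ) 1, deriv u ρ = u1 ρ := fun ρ hρ => (hud ρ hρ).deriv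
  have hd2 : ∀ ρ ∈ Ioo (0:ℝ) 1, deriv (deriv u) ρ = u2 ρ := by
    intro ρ hρ
    have heq : deriv u =ᶠ[nhds ρ] u1 := Filter.eventuallyEq_of_mem (hO.mem_nhds hρ) hd1
    rw [heq.deriv_eq]
    exact (hu1d ρ hρ).deriv
  have key : ∀ ρ ∈ Ioo (0:ℝ) 1,
      -(1 - (ρ:ℂ)^2) * u2 ρ - (2 / (ρ:ℂ)) * u1 ρ
        + 2 * (lam + 2) * (ρ:ℂ) * u1 ρ
        + ((lam + 1) * (lam + 2) - 6) * u ρ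
        + ((ℓ:ℂ) * ((ℓ:ℂ) + 1) / (ρ:ℂ)^2) * u ρ
      = (-4) * (ρ:ℂ)^ℓ *
        (((ρ^2:ℝ):ℂ) * (1 - ((ρ^2:ℝ):ℂ)) * deriv (deriv v) (ρ^2)
        + ((3/2 + (ℓ:ℂ)) - (((-1 + (ℓ:ℂ) + lam)/2) + ((4 + (ℓ:ℂ) + lam)/2) + 1) * ((ρ^2:ℝ):ℂ))
          * deriv v (ρ^2)
        - ((-1 + (ℓ:ℂ) + lam)/2) * ((4 + (ℓ:ℂ) + lam)/2) * v (ρ^2)) := by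
    intro ρ hρ
    have hρ0 : (ρ:ℂ) ≠ 0 := by
      exact_mod_cast ne_of_gt hρ.1
    simp only [hu1, hu2, hu]
    push_cast
    linear_combination key_alg ℓ lam (ρ:ℂ) (v (ρ^2)) (deriv v (ρ^2)) (deriv (deriv v) (ρ^2)) hρ0
  constructor
  · intro h z hz
    set ρ := Real.sqrt z with hρdef
    have hρ : ρ ∈ Ioo (0:ℝ) 1 := by
      constructor
      · exact Real.sqrt_pos.mpr hz.1
      · rw [show (1:ℝ) = Real.sqrt 1 by simp]
        exact Real.sqrt_lt_sqrt (le_of_lt hz.1) hz.2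
    have hz2 : ρ^2 = z := Real.sq_sqrt (le_of_lt hz.1)
    have h0 := h ρ hρ
    rw [hd1 ρ hρ, hd2 ρ hρ, key ρ hρ] at h0
    rw [hz2] at h0
    have hρℓ : ((ρ:ℂ))^ℓ ≠ 0 := pow_ne_zero _ (by exact_mod_cast ne_of_gt hρ.1)
    have := mul_eq_zero.mp h0
    rcases this with h' | h'
    · rcases mul_eq_zero.mp h' with h'' | h''
      · norm_num at h''
      · exact absurd h'' hρℓ
    · exact h'
  · intro h ρ hρ
    rw [hd1 ρ hρ, hd2 ρ hρ, key ρ hρ, h (ρ^2) (hsq ρ hρ), mul_zero]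
end

section
/- There is no twice continuously differentiable function u : (0,1) → ℂ satisfying both the inhomogeneous ordinary differential equation −(1−ρ²)u''(ρ) − (2/ρ)u'(ρ) + 4ρ u'(ρ) − 4u(ρ) + (2/ρ²)u(ρ) = ρ for all ρ ∈ (0,1) and the weighted integrability condition ∫_0^1 ( |u'(ρ)|² + |u(ρ)|² ) ρ² dρ < ∞. -/
open Set MeasureTheory

private lemma aux_nonint {f : ℝ → ℝ} {a b c : ℝ} (hab : a < b) (hc : c ∈ Set.Icc a b)
    (hf : IntegrableOn f (Ioo a b)) (h : ∀ x ∈ Ioo a b, |x - c|⁻¹ ≤ f x) : False := by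
  have hI : IntervalIntegrable (fun x => (x - c)⁻¹) volume a b := by
    rw [intervalIntegrable_iff_integrableOn_Ioo_of_le hab.le]
    refine hf.mono' ((measurable_id.sub_const c).inv.aestronglyMeasurable) ?_
    refine (ae_restrict_iff' measurableSet_Ioo).2 (Filter.Eventually.of_forall ?_)
    intro x hx
    simpa [Real.norm_eq_abs, abs_inv] using h x hx
  rw [intervalIntegrable_sub_inv_iff] at hI
  rcases hI with h1 | h2
  · exact absurd h1 hab.ne
  · exact h2 (by rwa [Set.uIcc_of_le hab.le])

set_option maxHeartbeats 1000000 in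
/-- There is no twice continuously differentiable `u : (0,1) → ℂ` solving
`-(1-ρ²)u'' - (2/ρ)u' + 4ρu' - 4u + (2/ρ²)u = ρ` on `(0,1)` with
`∫_0^1 (|u'|² + |u|²)ρ² dρ < ∞`. -/
theorem stmt19 :
    ¬ ∃ u : ℝ → ℂ, ContDiffOn ℝ 2 u (Ioo 0 1) ∧
      (∀ ρ ∈ Ioo (0:ℝ) 1,
        -(1 - (ρ:ℂ)^2) * deriv (deriv u) ρ - (2 / (ρ:ℂ)) * deriv u ρ
          + 4 * (ρ:ℂ) * deriv u ρ - 4 * u ρ + (2 / (ρ:ℂ)^2) * u ρ = (ρ:ℂ)) ∧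
      IntegrableOn (fun ρ : ℝ => (‖deriv u ρ‖^2 + ‖u ρ‖^2) * ρ^2) (Ioo 0 1) := by
  rintro ⟨u, hu, hode, hint⟩
  set f : ℝ → ℝ := fun ρ => (‖deriv u ρ‖^2 + ‖u ρ‖^2) * ρ^2 with hfdef
  -- selection near 0
  have sel0 : ∀ ε > (0:ℝ), ∀ δ, 0 < δ → δ ≤ 1 → ∃ ρ ∈ Ioo (0:ℝ) δ, ρ * f ρ < ε := by
    intro ε hε δ hδ0 hδ1
    by_contra hcon
    push_neg at hcon
    refine aux_nonint (a := 0) (b := δ) (c := 0) hδ0 ⟨le_rfl, hδ0.le⟩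
      ((hint.mono_set (Ioo_subset_Ioo le_rfl hδ1)).const_mul ε⁻¹) ?_
    intro x hx
    have h1 := hcon x hx
    have hfx : (0:ℝ) ≤ f x := by positivity
    rw [sub_zero, abs_of_pos hx.1, inv_mul_eq_div, ← one_div,
      div_le_div_iff₀ hx.1 hε]
    nlinarith
  -- selection near 1
  have sel1 : ∀ ε > (0:ℝ), ∀ δ, 0 ≤ δ → δ < 1 → ∃ ρ ∈ Ioo δ (1:ℝ), (1 - ρ) * f ρ < ε := by
    intro ε hε δ hδ0 hδ1
    by_contra hcon
    push_neg at hcon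
    refine aux_nonint (a := δ) (b := 1) (c := 1) hδ1 ⟨hδ1.le, le_rfl⟩
      ((hint.mono_set (Ioo_subset_Ioo hδ0 le_rfl)).const_mul ε⁻¹) ?_
    intro x hx
    have h1 := hcon x hx
    have hfx : (0:ℝ) ≤ f x := by positivity
    have hx1 : 0 < 1 - x := by linarith [hx.2]
    rw [abs_of_neg (by linarith [hx.2] : x - 1 < 0), neg_sub, inv_mul_eq_div, ← one_div,
      div_le_div_iff₀ hx1 hε]
    nlinarith
  -- the Wronskian-type quantity
  set W : ℝ → ℂ := fun x => (x:ℂ)^2 * (1 - (x:ℂ)^2) * ((x:ℂ) * deriv u x - u x) + (x:ℂ)^5/5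
    with hWdef
  have hWd : ∀ ρ ∈ Ioo (0:ℝ) 1, HasDerivAt W 0 ρ := by
    intro ρ hρ
    have hρ0 : (ρ:ℂ) ≠ 0 := by exact_mod_cast (ne_of_gt hρ.1)
    have hmem : Ioo (0:ℝ) 1 ∈ nhds ρ := isOpen_Ioo.mem_nhds hρ
    have hd1 : ContDiffOn ℝ 1 (deriv u) (Ioo 0 1) :=
      hu.deriv_of_isOpen isOpen_Ioo (by norm_num)
    have hud : HasDerivAt u (deriv u ρ) ρ :=
      ((hu.differentiableOn (by norm_num)).differentiableAt hmem).hasDerivAt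
    have hdd : HasDerivAt (deriv u) (deriv (deriv u) ρ) ρ :=
      ((hd1.differentiableOn (by norm_num)).differentiableAt hmem).hasDerivAt
    have hc : HasDerivAt (fun x:ℝ => (x:ℂ)) 1 ρ := by
      simpa using (hasDerivAt_id ρ).ofReal_comp
    have hp2 : HasDerivAt (fun y : ℝ => (y:ℂ)^2) (2*(ρ:ℂ)^(2-1)) ρ := by
      simpa using (hasDerivAt_pow 2 ((ρ:ℝ):ℂ)).comp_ofReal
    have hp5 : HasDerivAt (fun y : ℝ => (y:ℂ)^5) (5*(ρ:ℂ)^(5-1)) ρ := by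
      simpa using (hasDerivAt_pow 5 ((ρ:ℝ):ℂ)).comp_ofReal
    have H := ((hp2.mul ((hasDerivAt_const ρ (1:ℂ)).sub hp2)).mul
      ((hc.mul hdd).sub hud)).add (hp5.div_const 5)
    refine H.congr_deriv ?_
    simp only [Pi.mul_apply, Pi.sub_apply]
    have key := hode ρ hρ
    field_simp at key
    linear_combination (-(ρ:ℂ)) * key
  -- W is constant on (0,1)
  have hWc : ∀ ρ ∈ Ioo (0:ℝ) 1, W ρ = W (1/2) := by
    intro ρ hρ
    refine (convex_Ioo (0:ℝ) 1).is_const_of_fderivWithin_eq_zero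
      (fun x hx => ((hWd x hx).differentiableAt).differentiableWithinAt) ?_ hρ (by norm_num)
    intro x hx
    rw [fderivWithin_of_isOpen isOpen_Ioo hx, (hWd x hx).hasFDerivAt.fderiv]
    ext
    simp
  -- C = 0 from the behaviour near 0
  have hzero : W (1/2) = 0 := by
    rw [← norm_le_zero_iff]
    by_contra hpos
    push_neg at hpos
    set ε := ‖W (1/2)‖ with hεdef
    obtain ⟨ρ, hρm, hlt⟩ := sel0 ((ε/3)^2) (by positivity) (min (1/2) (ε/2))
      (by positivity) (min_le_left _ _ |>.trans (by norm_num))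
    have hρ1 : ρ ∈ Ioo (0:ℝ) 1 :=
      ⟨hρm.1, lt_of_lt_of_le (hρm.2.trans_le (min_le_left _ _)) (by norm_num)⟩
    have hρε : ρ < ε/2 := hρm.2.trans_le (min_le_right _ _)
    set a := ‖deriv u ρ‖ with hadef
    set b := ‖u ρ‖ with hbdef
    have ha0 : 0 ≤ a := norm_nonneg _
    have hb0 : 0 ≤ b := norm_nonneg _
    have hρ0 : 0 < ρ := hρ1.1
    have hρlt : ρ < 1 := hρ1.2
    have hkey : ρ^3 * (a^2 + b^2) < (ε/3)^2 := by
      have h2 : ρ * f ρ = ρ^3 * (a^2+b^2) := by simp only [hfdef]; ring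
      rw [← h2]; exact hlt
    have ha : ρ^3 * a ≤ ε/3 := by
      have hp3 : ρ^3 ≤ 1 := pow_le_one₀ hρ0.le hρlt.le
      refine (abs_le_of_sq_le_sq' ?_ (by positivity)).2
      nlinarith [hkey, mul_nonneg (pow_pos hρ0 3).le (sq_nonneg b),
        mul_nonneg (mul_nonneg (sub_nonneg.2 hp3) (pow_pos hρ0 3).le) (sq_nonneg a)]
    have hb : ρ^2 * b ≤ ε/3 := by
      refine (abs_le_of_sq_le_sq' ?_ (by positivity)).2
      nlinarith [hkey, mul_nonneg (pow_pos hρ0 3).le (sq_nonneg a),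
        mul_nonneg (mul_nonneg (sub_nonneg.2 hρlt.le) (pow_pos hρ0 3).le) (sq_nonneg b)]
    have hWbound : ‖W ρ‖ ≤ ρ^2 * (1-ρ^2) * (ρ*a + b) + ρ^5/5 := by
      rw [hWdef]
      refine (norm_add_le _ _).trans ?_
      have e1 : ‖(ρ:ℂ)^2 * (1 - (ρ:ℂ)^2) * ((ρ:ℂ) * deriv u ρ - u ρ)‖
          ≤ ρ^2 * (1-ρ^2) * (ρ*a + b) := by
        rw [norm_mul, norm_mul, norm_pow, Complex.norm_real, Real.norm_eq_abs,
          abs_of_pos hρ0]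
        have e2 : ‖(1 - (ρ:ℂ)^2)‖ = 1 - ρ^2 := by
          rw [show (1 - (ρ:ℂ)^2) = (((1 - ρ^2 : ℝ)):ℂ) by push_cast; ring,
            Complex.norm_real, Real.norm_eq_abs, abs_of_pos (by nlinarith)]
        rw [e2]
        have e3 : ‖(ρ:ℂ) * deriv u ρ - u ρ‖ ≤ ρ*a + b := by
          refine (norm_sub_le _ _).trans ?_
          rw [norm_mul, Complex.norm_real, Real.norm_eq_abs, abs_of_pos hρ0]
        exact mul_le_mul_of_nonneg_left e3 (mul_nonneg (sq_nonneg ρ) (by nlinarith))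
      have e4 : ‖(ρ:ℂ)^5/5‖ = ρ^5/5 := by
        rw [norm_div, norm_pow, Complex.norm_real, Real.norm_eq_abs, abs_of_pos hρ0]
        norm_num
      rw [e4]
      linarith
    have hWρ : ε ≤ ‖W ρ‖ := le_of_eq (congrArg norm (hWc ρ hρ1)).symm
    have hq : ρ^2 * (1-ρ^2) * (ρ*a + b) ≤ ρ^3*a + ρ^2*b := by
      nlinarith [mul_nonneg (pow_nonneg hρ0.le 4) (by positivity : (0:ℝ) ≤ ρ*a + b)]
    have hρ5 : ρ^5 ≤ ρ := by
      nlinarith [mul_nonneg hρ0.le (sub_nonneg.2 (pow_le_one₀ hρ0.le hρlt.le : ρ^4 ≤ 1))]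
    linarith [hWbound, ha, hb, hρε]
  -- C = 1/5 from the behaviour near 1
  have hfifth : W (1/2) = 1/5 := by
    rw [← sub_eq_zero, ← norm_le_zero_iff]
    by_contra hpos
    push_neg at hpos
    set ε := ‖W (1/2) - 1/5‖ with hεdef
    obtain ⟨ρ, hρm, hlt⟩ := sel1 ((ε/5)^2) (by positivity) (max (1/2) (1 - ε/5))
      (le_max_of_le_left (by norm_num)) (by
        refine max_lt (by norm_num) (by linarith))
    have hρ1 : ρ ∈ Ioo (0:ℝ) 1 :=
      ⟨lt_of_lt_of_le (by norm_num) ((le_max_left _ _).trans hρm.1.le), hρm.2⟩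
    have hρε : 1 - ρ < ε/5 := by
      have := (le_max_right (1/2:ℝ) (1 - ε/5)).trans_lt hρm.1
      linarith
    set a := ‖deriv u ρ‖ with hadef
    set b := ‖u ρ‖ with hbdef
    have ha0 : 0 ≤ a := norm_nonneg _
    have hb0 : 0 ≤ b := norm_nonneg _
    have hρ0 : 0 < ρ := hρ1.1
    have hρlt : ρ < 1 := hρ1.2
    have hs0 : 0 < 1 - ρ := by linarith
    have hkey : (1-ρ) * ρ^2 * (a^2 + b^2) < (ε/5)^2 := by
      have h2 : (1-ρ) * f ρ = (1-ρ) * ρ^2 * (a^2+b^2) := by simp only [hfdef]; ring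
      rw [← h2]; exact hlt
    have h2le : ρ^2 ≤ 1 := pow_le_one₀ hρ0.le hρlt.le
    have hle1 : (1-ρ) * ρ^2 ≤ 1 := by nlinarith [h2le, sq_nonneg ρ]
    have ha : (1-ρ) * ρ^2 * a ≤ ε/5 := by
      refine (abs_le_of_sq_le_sq' ?_ (by positivity)).2
      nlinarith [hkey, mul_nonneg (mul_nonneg hs0.le (sq_nonneg ρ)) (sq_nonneg b),
        mul_nonneg (mul_nonneg (sub_nonneg.2 hle1) (mul_nonneg hs0.le (sq_nonneg ρ))) (sq_nonneg a)]
    have hb : (1-ρ) * ρ^2 * b ≤ ε/5 := by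
      refine (abs_le_of_sq_le_sq' ?_ (by positivity)).2
      nlinarith [hkey, mul_nonneg (mul_nonneg hs0.le (sq_nonneg ρ)) (sq_nonneg a),
        mul_nonneg (mul_nonneg (sub_nonneg.2 hle1) (mul_nonneg hs0.le (sq_nonneg ρ))) (sq_nonneg b)]
    have hWbound : ‖W ρ - 1/5‖ ≤ ρ^2 * (1-ρ^2) * (ρ*a + b) + (1-ρ^5)/5 := by
      have hsplit : W ρ - 1/5 = (ρ:ℂ)^2 * (1 - (ρ:ℂ)^2) * ((ρ:ℂ) * deriv u ρ - u ρ)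
          + ((ρ:ℂ)^5 - 1)/5 := by rw [hWdef]; ring
      rw [hsplit]
      refine (norm_add_le _ _).trans ?_
      have e1 : ‖(ρ:ℂ)^2 * (1 - (ρ:ℂ)^2) * ((ρ:ℂ) * deriv u ρ - u ρ)‖
          ≤ ρ^2 * (1-ρ^2) * (ρ*a + b) := by
        rw [norm_mul, norm_mul, norm_pow, Complex.norm_real, Real.norm_eq_abs,
          abs_of_pos hρ0]
        have e2 : ‖(1 - (ρ:ℂ)^2)‖ = 1 - ρ^2 := by
          rw [show (1 - (ρ:ℂ)^2) = (((1 - ρ^2 : ℝ)):ℂ) by push_cast; ring,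
            Complex.norm_real, Real.norm_eq_abs, abs_of_pos (by nlinarith)]
        rw [e2]
        have e3 : ‖(ρ:ℂ) * deriv u ρ - u ρ‖ ≤ ρ*a + b := by
          refine (norm_sub_le _ _).trans ?_
          rw [norm_mul, Complex.norm_real, Real.norm_eq_abs, abs_of_pos hρ0]
        exact mul_le_mul_of_nonneg_left e3 (mul_nonneg (sq_nonneg ρ) (by nlinarith))
      have e4 : ‖((ρ:ℂ)^5 - 1)/5‖ = (1-ρ^5)/5 := by
        rw [show ((ρ:ℂ)^5 - 1) = (((ρ^5 - 1 : ℝ)):ℂ) by push_cast; ring]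
        rw [norm_div, Complex.norm_real, Real.norm_eq_abs,
          abs_of_nonpos (by nlinarith [(pow_le_one₀ hρ0.le hρlt.le : ρ^5 ≤ 1)] : ρ^5 - 1 ≤ 0)]
        norm_num
      rw [e4]
      linarith
    have hWρ : ε ≤ ‖W ρ - 1/5‖ := le_of_eq (congrArg (fun z => ‖z - 1/5‖) (hWc ρ hρ1)).symm
    have hX : 0 ≤ (1-ρ)*ρ^2 := mul_nonneg hs0.le (sq_nonneg ρ)
    have hq1 : ρ^2 * (1-ρ^2) * (ρ*a + b) ≤ 2*((1-ρ)*ρ^2*a) + 2*((1-ρ)*ρ^2*b) := by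
      have t1 : 0 ≤ ((1-ρ)*ρ^2*a) * (2 - ρ - ρ^2) :=
        mul_nonneg (mul_nonneg hX ha0) (by nlinarith)
      have t2 : 0 ≤ ((1-ρ)*ρ^2*b) * (1 - ρ) := mul_nonneg (mul_nonneg hX hb0) hs0.le
      nlinarith [t1, t2]
    have hq2 : (1-ρ^5)/5 ≤ 1-ρ := by
      nlinarith [(pow_le_one₀ hρ0.le hρlt.le : ρ^2 ≤ 1), (pow_le_one₀ hρ0.le hρlt.le : ρ^3 ≤ 1),
        (pow_le_one₀ hρ0.le hρlt.le : ρ^4 ≤ 1), hρ0.le, hρlt.le]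
    linarith [hWbound, ha, hb, hρε]
  rw [hzero] at hfifth
  norm_num at hfifth
end
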